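/- Let μ be a probability measure on [0, 1] with continuous density f with respect to Lebesgue measure, and suppose lim_{x→1⁻} f(x) = c for some c > 0. Then, with ζ_μ(k) = ∑_{j=1}^∞ m_j^k the moment zeta function of μ (which is finite for every integer k ≥ 2), lim_{n→∞} (1/(n log n)) ∑_{k=2}^n (−1)^k C(n,k) ζ_μ(k) = c. -/

import Mathlib

open MeasureTheory Filter Finset
open scoped Topology


lemma aux_gauss (n : ℕ) : (∑ i ∈ range n, (i:ℝ)) = n * (n-1) / 2 := by
  induction n with
  | zero => simp
  | succ k ih => rw [Finset.sum_range_succ, ih]; push_cast; ring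

lemma aux_pow_sub_pow {a b : ℝ} (h0 : 0 ≤ b) (hba : b ≤ a) (h1 : a ≤ 1) (n : ℕ) :
    a ^ n - b ^ n ≤ n * (a - b) := by
  induction n with
  | zero => simp
  | succ n ih =>
    have hb1 : b ≤ 1 := hba.trans h1
    have hbn : b ^ n ≤ 1 := pow_le_one₀ h0 hb1
    have han : a ^ n ≤ 1 := pow_le_one₀ (h0.trans hba) h1
    have hnn : 0 ≤ a ^ n - b ^ n := sub_nonneg.2 (pow_le_pow_left₀ h0 hba n)
    have h3 : a * (a ^ n - b ^ n) ≤ a ^ n - b ^ n := by nlinarith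
    have h4 : (a - b) * b ^ n ≤ (a - b) := by nlinarith
    have h2 : a ^ (n+1) - b ^ (n+1) = a * (a ^ n - b ^ n) + (a - b) * b ^ n := by ring
    push_cast
    linarith

lemma aux_h_nonneg {t : ℝ} (h0 : 0 ≤ t) (h1 : t ≤ 1) (n : ℕ) :
    0 ≤ (1 - t) ^ n - 1 + n * t := by
  have := one_add_mul_le_pow (a := -t) (by linarith) n
  simp only [mul_neg] at this
  have he : ((1:ℝ) + -t) = 1 - t := by ring
  rw [he] at this
  linarith

lemma aux_h_le_nt {t : ℝ} (h0 : 0 ≤ t) (h1 : t ≤ 1) (n : ℕ) :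
    (1 - t) ^ n - 1 + n * t ≤ n * t := by
  have : (1 - t) ^ n ≤ 1 := pow_le_one₀ (by linarith) (by linarith)
  linarith

lemma aux_h_ge {t : ℝ} (n : ℕ) (h1 : t ≤ 1) :
    (n : ℝ) * t - 1 ≤ (1 - t) ^ n - 1 + n * t := by
  have : (0:ℝ) ≤ (1 - t) ^ n := pow_nonneg (by linarith) n
  linarith

lemma aux_h_mono {s t : ℝ} (h0 : 0 ≤ s) (hst : s ≤ t) (h1 : t ≤ 1) (n : ℕ) :
    (1 - s) ^ n - 1 + n * s ≤ (1 - t) ^ n - 1 + n * t := by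
  have := aux_pow_sub_pow (a := 1 - s) (b := 1 - t) (by linarith) (by linarith) (by linarith) n
  nlinarith [this]

lemma aux_h_le_sq {t : ℝ} (h0 : 0 ≤ t) (h1 : t ≤ 1) (n : ℕ) :
    (1 - t) ^ n - 1 + n * t ≤ (n : ℝ) ^ 2 * t ^ 2 / 2 := by
  have hgeom : (1 : ℝ) - (1 - t) ^ n = t * ∑ i ∈ range n, (1 - t) ^ i := by
    have h := geom_sum_mul (x := (1 - t : ℝ)) n
    linear_combination h
  have hterm : ∀ i ∈ range n, (1 : ℝ) - i * t ≤ (1 - t) ^ i := by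
    intro i _
    have := one_add_mul_le_pow (a := -t) (by linarith) i
    simp only [mul_neg] at this
    have he : ((1:ℝ) + -t) = 1 - t := by ring
    rw [he] at this
    linarith
  have hsum : ∑ i ∈ range n, ((1:ℝ) - i * t) ≤ ∑ i ∈ range n, (1 - t) ^ i :=
    Finset.sum_le_sum hterm
  have hid : ∑ i ∈ range n, ((1:ℝ) - i * t) = n - (∑ i ∈ range n, (i:ℝ)) * t := by
    rw [Finset.sum_sub_distrib]
    simp [← Finset.sum_mul]
  have h2 : t * ((n:ℝ) - n * (n-1)/2 * t) ≤ 1 - (1 - t) ^ n := by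
    rw [hgeom]
    have hge : (n : ℝ) - n * (n-1)/2 * t ≤ ∑ i ∈ range n, (1 - t) ^ i := by
      rw [← aux_gauss n]
      calc (n : ℝ) - (∑ i ∈ range n, (i:ℝ)) * t = ∑ i ∈ range n, ((1:ℝ) - i * t) := hid.symm
        _ ≤ _ := hsum
    nlinarith
  have hn1 : (0:ℝ) ≤ n := Nat.cast_nonneg n
  nlinarith [h2]

-- log telescoping bounds
lemma aux_log_step_le (x : ℝ) (hx : 1 ≤ x) :
    Real.log (x + 1) - Real.log x ≤ 1 / x := by
  have hx0 : 0 < x := by linarith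
  have h := Real.log_le_sub_one_of_pos (x := (x+1)/x) (by positivity)
  rw [Real.log_div (by linarith) (ne_of_gt hx0)] at h
  have : (x + 1) / x - 1 = 1 / x := by field_simp; ring
  linarith [h, this.ge, this.le]

lemma aux_log_step_ge (x : ℝ) (hx : 1 ≤ x) :
    1 / (x + 1) ≤ Real.log (x + 1) - Real.log x := by
  have hx0 : 0 < x := by linarith
  have h := Real.log_le_sub_one_of_pos (x := x/(x+1)) (by positivity)
  rw [Real.log_div (ne_of_gt hx0) (by linarith)] at h
  have : x / (x + 1) - 1 = -(1 / (x+1)) := by field_simp; ring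
  linarith

lemma aux_sum_inv_le (A K : ℕ) (hA : 1 ≤ A) :
    ∑ j ∈ range K, (1:ℝ) / (A + j + 1) ≤ Real.log (A + K) - Real.log A := by
  have htel : ∑ j ∈ range K, (Real.log (A + j + 1) - Real.log (A + j))
      = Real.log (A + K) - Real.log A := by
    have := Finset.sum_range_sub (fun j => Real.log (A + j)) K
    push_cast at this ⊢
    convert this using 2 <;> push_cast <;> ring_nf
  rw [← htel]
  apply Finset.sum_le_sum
  intro j _
  have hA1 : (1:ℝ) ≤ A + j := by
    have : (1:ℝ) ≤ (A:ℝ) := by exact_mod_cast hA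
    have : (0:ℝ) ≤ j := Nat.cast_nonneg j
    linarith
  have := aux_log_step_ge ((A:ℝ) + j) hA1
  linarith

lemma aux_sum_inv_ge (A K : ℕ) (hA : 1 ≤ A) :
    Real.log (A + K) - Real.log A ≤ ∑ j ∈ range K, (1:ℝ) / (A + j) := by
  have htel : ∑ j ∈ range K, (Real.log (A + j + 1) - Real.log (A + j))
      = Real.log (A + K) - Real.log A := by
    have := Finset.sum_range_sub (fun j => Real.log (A + j)) K
    push_cast at this ⊢
    convert this using 2 <;> push_cast <;> ring_nf
  rw [← htel]
  apply Finset.sum_le_sum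
  intro j _
  have hA1 : (1:ℝ) ≤ A + j := by
    have h1 : (1:ℝ) ≤ (A:ℝ) := by exact_mod_cast hA
    have h2 : (0:ℝ) ≤ j := Nat.cast_nonneg j
    linarith
  exact aux_log_step_le ((A:ℝ) + j) hA1



lemma aux_tail_sq (n : ℕ) (hn : 1 ≤ n) :
    ∃ s : ℝ, HasSum (fun j : ℕ => (1:ℝ) / ((n:ℝ) + 1 + j) ^ 2) s ∧ s ≤ 1 / n := by
  set v : ℕ → ℝ := fun j => 1 / ((n:ℝ) + j) with hv
  have hpos : ∀ j : ℕ, (0:ℝ) < (n:ℝ) + j := by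
    intro j
    have h1 : (1:ℝ) ≤ (n:ℝ) := by exact_mod_cast hn
    have h2 := Nat.cast_nonneg (α := ℝ) j
    linarith
  have hle : ∀ j : ℕ, (1:ℝ) / ((n:ℝ) + 1 + j) ^ 2 ≤ v j - v (j+1) := by
    intro j
    have h1 := hpos j
    have h2 : (0:ℝ) < (n:ℝ) + j + 1 := by linarith
    have he : v j - v (j+1) = 1 / (((n:ℝ)+j) * ((n:ℝ)+j+1)) := by
      rw [hv]; push_cast
      rw [div_sub_div _ _ (ne_of_gt h1) (by linarith : ((n:ℝ)+(j+1)) ≠ 0)]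
      congr 1 <;> ring
    rw [he]
    apply div_le_div_of_nonneg_left (by norm_num) (by positivity)
    push_cast; nlinarith
  have htel : HasSum (fun j : ℕ => v j - v (j+1)) (1 / n) := by
    have hnn : ∀ j : ℕ, 0 ≤ v j - v (j+1) := by
      intro j
      exact le_trans (by positivity) (hle j)
    rw [hasSum_iff_tendsto_nat_of_nonneg hnn]
    have hps : ∀ N : ℕ, ∑ j ∈ range N, (v j - v (j+1)) = v 0 - v N :=
      fun N => Finset.sum_range_sub' v N
    simp only [hps]
    have hv0 : v 0 = 1 / n := by simp [hv]
    have hvlim : Tendsto v atTop (𝓝 0) := by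
      have h1 : Tendsto (fun j : ℕ => (n:ℝ) + j) atTop atTop :=
        tendsto_atTop_add_const_left _ _ tendsto_natCast_atTop_atTop
      have := h1.inv_tendsto_atTop
      simp only [hv, one_div]; exact this
    have := Tendsto.const_sub (1/(n:ℝ)) hvlim
    simpa [hv0] using this
  have hsummable : Summable (fun j : ℕ => (1:ℝ) / ((n:ℝ) + 1 + j) ^ 2) :=
    htel.summable.of_nonneg_of_le (fun j => by positivity) hle
  refine ⟨_, hsummable.hasSum, ?_⟩
  calc ∑' j : ℕ, (1:ℝ) / ((n:ℝ) + 1 + j) ^ 2 ≤ ∑' j, (v j - v (j+1)) :=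
        Summable.tsum_le_tsum hle hsummable htel.summable
    _ = 1 / n := htel.tsum_eq

lemma aux_binom (t : ℝ) (n : ℕ) (hn : 2 ≤ n) :
    ∑ k ∈ Icc 2 n, (-1:ℝ)^k * (n.choose k : ℝ) * t ^ k
      = (1 - t) ^ n - 1 + n * t := by
  have hpow : ((-t) + 1) ^ n = ∑ k ∈ range (n+1), (-t) ^ k * 1 ^ (n-k) * (n.choose k : ℝ) :=
    add_pow (-t) 1 n
  have hsub : ∑ k ∈ Icc 2 n, (-t) ^ k * 1 ^ (n-k) * (n.choose k : ℝ)
      = ∑ k ∈ range (n+1), (-t) ^ k * 1 ^ (n-k) * (n.choose k : ℝ)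
        - ∑ k ∈ range 2, (-t) ^ k * 1 ^ (n-k) * (n.choose k : ℝ) := by
    rw [← Finset.Ico_add_one_right_eq_Icc, Finset.sum_Ico_eq_sub _ (by omega)]
  have hr2 : ∑ k ∈ range 2, (-t) ^ k * 1 ^ (n-k) * (n.choose k : ℝ) = 1 - n * t := by
    rw [Finset.sum_range_succ, Finset.sum_range_one]
    simp [Nat.choose_one_right]
    ring
  have hcongr : ∑ k ∈ Icc 2 n, (-1:ℝ)^k * (n.choose k : ℝ) * t ^ k
      = ∑ k ∈ Icc 2 n, (-t) ^ k * 1 ^ (n-k) * (n.choose k : ℝ) := by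
    apply Finset.sum_congr rfl
    intro k _
    rw [neg_pow t k, one_pow]
    ring
  rw [hcongr, hsub, ← hpow, hr2]
  ring_nf


lemma aux_int_pow (j : ℕ) : ∫ x in Set.Icc (0:ℝ) 1, x ^ j = 1 / ((j:ℝ)+1) := by
  rw [MeasureTheory.integral_Icc_eq_integral_Ioc,
    ← intervalIntegral.integral_of_le (by norm_num : (0:ℝ) ≤ 1), integral_pow]
  norm_num

section moments
variable (f : ℝ → ℝ) (c : ℝ) (hc : 0 < c)
  (hf_cont : ContinuousOn f (Set.Icc (0 : ℝ) 1))
  (hf_nonneg : ∀ x ∈ Set.Icc (0 : ℝ) 1, 0 ≤ f x)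
  (hf_prob : ∫ x in Set.Icc (0 : ℝ) 1, f x = 1)
  (hf_lim : Tendsto f (nhdsWithin 1 (Set.Iio 1)) (𝓝 c))
  (m : ℕ → ℝ) (hm : ∀ j, m j = ∫ x in Set.Icc (0 : ℝ) 1, x ^ j * f x)

include hf_cont hf_nonneg hm in
lemma aux_m_nonneg (j : ℕ) : 0 ≤ m j := by
  rw [hm]
  apply MeasureTheory.setIntegral_nonneg measurableSet_Icc
  intro x hx
  exact mul_nonneg (pow_nonneg hx.1 j) (hf_nonneg x hx)

include hf_cont hf_nonneg hf_prob hm in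
lemma aux_m_le_one (j : ℕ) : m j ≤ 1 := by
  rw [hm]
  have key : ∫ x in Set.Icc (0:ℝ) 1, x ^ j * f x ≤ ∫ x in Set.Icc (0:ℝ) 1, f x := by
    apply MeasureTheory.setIntegral_mono_on
    · exact ((continuous_pow j).continuousOn.mul hf_cont).integrableOn_Icc
    · exact hf_cont.integrableOn_Icc
    · exact measurableSet_Icc
    · intro x hx
      have hx1 : x ^ j ≤ 1 := pow_le_one₀ hx.1 hx.2
      nlinarith [hf_nonneg x hx, pow_nonneg hx.1 j]
  rw [hf_prob] at key
  exact key

include hf_cont hf_nonneg hm in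
lemma aux_m_decay : ∃ M : ℝ, 0 ≤ M ∧ ∀ j : ℕ, m j ≤ M / ((j:ℝ)+1) := by
  obtain ⟨M, hM⟩ := isCompact_Icc.exists_bound_of_continuousOn hf_cont
  have hM0 : 0 ≤ M := le_trans (norm_nonneg (f 0)) (hM 0 (by norm_num))
  refine ⟨M, hM0, fun j => ?_⟩
  have h1 : m j ≤ ∫ x in Set.Icc (0:ℝ) 1, x ^ j * M := by
    rw [hm]
    apply MeasureTheory.setIntegral_mono_on
    · exact ((continuous_pow j).continuousOn.mul hf_cont).integrableOn_Icc
    · exact (((continuous_pow j).mul continuous_const).continuousOn).integrableOn_Icc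
    · exact measurableSet_Icc
    · intro x hx
      have := hM x hx
      rw [Real.norm_eq_abs, abs_le] at this
      exact mul_le_mul_of_nonneg_left this.2 (pow_nonneg hx.1 j)
  calc m j ≤ ∫ x in Set.Icc (0:ℝ) 1, x ^ j * M := h1
    _ = (∫ x in Set.Icc (0:ℝ) 1, x ^ j) * M := by rw [MeasureTheory.integral_mul_const]
    _ = M / ((j:ℝ)+1) := by rw [aux_int_pow]; ring

end moments


lemma aux_int_pow' (j : ℕ) : ∫ x in Set.Icc (0:ℝ) 1, x ^ j = 1 / ((j:ℝ)+1) := by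
  rw [MeasureTheory.integral_Icc_eq_integral_Ioc,
    ← intervalIntegral.integral_of_le (by norm_num : (0:ℝ) ≤ 1), integral_pow]
  norm_num

section abelian
variable {f : ℝ → ℝ} {c : ℝ} {m : ℕ → ℝ}

lemma aux_f_one (hf_cont : ContinuousOn f (Set.Icc (0 : ℝ) 1))
    (hf_lim : Tendsto f (nhdsWithin 1 (Set.Iio 1)) (𝓝 c)) : f 1 = c := by
  have h1 : Tendsto f (nhdsWithin 1 (Set.Ico 0 1)) (𝓝 (f 1)) :=
    (hf_cont 1 (by norm_num)).mono_left
      (nhdsWithin_mono 1 Set.Ico_subset_Icc_self)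
  have h2 : Tendsto f (nhdsWithin 1 (Set.Ico 0 1)) (𝓝 c) :=
    hf_lim.mono_left (nhdsWithin_mono 1 (fun x hx => hx.2))
  have hne : (nhdsWithin 1 (Set.Ico (0:ℝ) 1)).NeBot := by
    rw [← mem_closure_iff_nhdsWithin_neBot, closure_Ico (by norm_num : (0:ℝ) ≠ 1)]
    exact ⟨by norm_num, le_rfl⟩
  exact tendsto_nhds_unique h1 h2

lemma aux_abelian (hc : 0 < c)
    (hf_cont : ContinuousOn f (Set.Icc (0 : ℝ) 1))
    (hf_lim : Tendsto f (nhdsWithin 1 (Set.Iio 1)) (𝓝 c))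
    (hm : ∀ j, m j = ∫ x in Set.Icc (0 : ℝ) 1, x ^ j * f x) :
    Tendsto (fun j : ℕ => ((j:ℝ)+1) * m j) atTop (𝓝 c) := by
  obtain ⟨M, hM⟩ := isCompact_Icc.exists_bound_of_continuousOn hf_cont
  have hf1 : f 1 = c := aux_f_one hf_cont hf_lim
  rw [Metric.tendsto_atTop]
  intro ε hε
  -- get θ
  have hev : ∀ᶠ x in nhdsWithin 1 (Set.Iio 1), dist (f x) c < ε / 2 :=
    Metric.tendsto_nhds.mp hf_lim (ε/2) (by positivity)
  rw [Filter.eventually_iff, Metric.mem_nhdsWithin_iff] at hev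
  obtain ⟨δ, hδ0, hδ⟩ := hev
  set θ : ℝ := min δ 1 with hθdef
  have hθ0 : 0 < θ := lt_min hδ0 one_pos
  have hθ1 : θ ≤ 1 := min_le_right _ _
  have hball : ∀ x ∈ Set.Ioc (1-θ) 1, |f x - c| ≤ ε / 2 := by
    intro x hx
    rcases eq_or_lt_of_le hx.2 with h | h
    · rw [h, hf1]; simp; positivity
    · have hxball : x ∈ Metric.ball (1:ℝ) δ ∩ Set.Iio 1 := by
        refine ⟨?_, h⟩
        rw [Metric.mem_ball, Real.dist_eq, abs_lt]
        constructor
        · linarith [hx.1, min_le_left δ 1]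
        · linarith
      have := hδ hxball
      rw [Set.mem_setOf_eq, Real.dist_eq] at this
      exact this.le
  -- integrability
  have hint : ∀ j : ℕ, IntegrableOn (fun x => x ^ j * (f x - c)) (Set.Icc (0:ℝ) 1) volume :=
    fun j => (((continuous_pow j).continuousOn).mul (hf_cont.sub continuousOn_const)).integrableOn_Icc
  have hintf : ∀ j : ℕ, IntegrableOn (fun x => x ^ j * f x) (Set.Icc (0:ℝ) 1) volume :=
    fun j => (((continuous_pow j).continuousOn).mul hf_cont).integrableOn_Icc
  -- identity: ∫ x^j (f - c) = m j - c/(j+1)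
  have hid : ∀ j : ℕ, ∫ x in Set.Icc (0:ℝ) 1, x ^ j * (f x - c)
      = m j - c / ((j:ℝ)+1) := by
    intro j
    have : (fun x => x ^ j * (f x - c)) = fun x => x ^ j * f x - x ^ j * c := by
      funext x; ring
    rw [this, MeasureTheory.integral_sub (g := fun x : ℝ => x ^ j * c) (hintf j)
      ((((continuous_pow j).mul continuous_const).continuousOn).integrableOn_Icc),
      MeasureTheory.integral_mul_const, aux_int_pow', hm j]
    ring
  -- split the integral
  have hsetsplit : Set.Icc (0:ℝ) 1 = Set.Icc 0 (1-θ) ∪ Set.Ioc (1-θ) 1 :=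
    (Set.Icc_union_Ioc_eq_Icc (by linarith) (by linarith)).symm
  have hdisj : Disjoint (Set.Icc (0:ℝ) (1-θ)) (Set.Ioc (1-θ) 1) := by
    apply Set.disjoint_left.2
    intro x hx1 hx2
    exact absurd hx1.2 (not_le.2 hx2.1)
  have hsplit : ∀ j : ℕ, ∫ x in Set.Icc (0:ℝ) 1, x ^ j * (f x - c)
      = (∫ x in Set.Icc (0:ℝ) (1-θ), x ^ j * (f x - c))
        + ∫ x in Set.Ioc (1-θ) 1, x ^ j * (f x - c) := by
    intro j
    rw [hsetsplit]
    exact MeasureTheory.setIntegral_union hdisj measurableSet_Ioc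
      ((hint j).mono_set (by rw [hsetsplit]; exact Set.subset_union_left))
      ((hint j).mono_set (by rw [hsetsplit]; exact Set.subset_union_right))
  -- bound piece A
  have hA : ∀ j : ℕ, ‖∫ x in Set.Icc (0:ℝ) (1-θ), x ^ j * (f x - c)‖
      ≤ (1-θ)^j * (M + |c|) := by
    intro j
    have hb : ∀ x ∈ Set.Icc (0:ℝ) (1-θ), ‖x ^ j * (f x - c)‖ ≤ (1-θ)^j * (M + |c|) := by
      intro x hx
      have hx01 : x ∈ Set.Icc (0:ℝ) 1 := ⟨hx.1, by linarith [hx.2]⟩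
      have h1 : |x ^ j| ≤ (1-θ)^j := by
        rw [abs_of_nonneg (pow_nonneg hx.1 j)]
        exact pow_le_pow_left₀ hx.1 hx.2 j
      have h2 : |f x - c| ≤ M + |c| := by
        have := hM x hx01
        rw [Real.norm_eq_abs] at this
        calc |f x - c| ≤ |f x| + |c| := abs_sub _ _
          _ ≤ M + |c| := by linarith
      rw [Real.norm_eq_abs, abs_mul]
      have h3 : (0:ℝ) ≤ M + |c| := by
        have := (norm_nonneg (f x)).trans (hM x hx01)
        have := abs_nonneg c
        linarith
      exact mul_le_mul h1 h2 (abs_nonneg _) (pow_nonneg (by linarith) j)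
    have hμ : volume (Set.Icc (0:ℝ) (1-θ)) < ⊤ := measure_Icc_lt_top
    have hM0 : (0:ℝ) ≤ M := (norm_nonneg (f 0)).trans (hM 0 (by norm_num))
    have hint' : IntegrableOn (fun x => x ^ j * (f x - c)) (Set.Icc (0:ℝ) (1-θ)) volume :=
      (hint j).mono_set (Set.Icc_subset_Icc le_rfl (by linarith))
    have := MeasureTheory.norm_setIntegral_le_of_norm_le_const hμ hb
    calc ‖∫ x in Set.Icc (0:ℝ) (1-θ), x ^ j * (f x - c)‖
        ≤ (1-θ)^j * (M + |c|) * (volume (Set.Icc (0:ℝ) (1-θ))).toReal := this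
      _ ≤ (1-θ)^j * (M + |c|) * 1 := by
          apply mul_le_mul_of_nonneg_left _
            (mul_nonneg (pow_nonneg (by linarith) j) (by linarith [abs_nonneg c]))
          rw [Real.volume_Icc]
          rw [ENNReal.toReal_ofReal (by linarith)]
          linarith
      _ = (1-θ)^j * (M + |c|) := by ring
  -- bound piece B
  have hB : ∀ j : ℕ, ‖∫ x in Set.Ioc (1-θ) 1, x ^ j * (f x - c)‖
      ≤ (ε/2) * (1 / ((j:ℝ)+1)) := by
    intro j
    have hIoc_sub : Set.Ioc (1-θ) 1 ⊆ Set.Icc (0:ℝ) 1 :=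
      fun x hx => ⟨by linarith [hx.1], hx.2⟩
    have hint1 : IntegrableOn (fun x => x ^ j * (f x - c)) (Set.Ioc (1-θ) 1) volume :=
      (hint j).mono_set hIoc_sub
    have hint2 : IntegrableOn (fun x => x ^ j * (ε/2)) (Set.Ioc (1-θ) 1) volume :=
      (((continuous_pow j).mul continuous_const).continuousOn.mono
        (fun x hx => trivial) : ContinuousOn _ (Set.Icc (1-θ) 1)).integrableOn_Icc.mono_set
          Set.Ioc_subset_Icc_self
    have hint3 : IntegrableOn (fun x => x ^ j * (ε/2)) (Set.Icc (0:ℝ) 1) volume :=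
      ((continuous_pow j).mul continuous_const).continuousOn.integrableOn_Icc
    calc ‖∫ x in Set.Ioc (1-θ) 1, x ^ j * (f x - c)‖
        ≤ ∫ x in Set.Ioc (1-θ) 1, ‖x ^ j * (f x - c)‖ :=
          MeasureTheory.norm_integral_le_integral_norm _
      _ ≤ ∫ x in Set.Ioc (1-θ) 1, x ^ j * (ε/2) := by
          apply MeasureTheory.setIntegral_mono_on hint1.norm hint2 measurableSet_Ioc
          intro x hx
          have hx0 : (0:ℝ) ≤ x := by linarith [hx.1]
          rw [Real.norm_eq_abs, abs_mul, abs_of_nonneg (pow_nonneg hx0 j)]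
          exact mul_le_mul_of_nonneg_left (hball x hx) (pow_nonneg hx0 j)
      _ ≤ ∫ x in Set.Icc (0:ℝ) 1, x ^ j * (ε/2) := by
          apply MeasureTheory.setIntegral_mono_set hint3
          · filter_upwards [MeasureTheory.ae_restrict_mem measurableSet_Icc] with x hx
            have := pow_nonneg hx.1 j
            positivity
          · exact MeasureTheory.ae_of_all _ hIoc_sub
      _ = (ε/2) * (1 / ((j:ℝ)+1)) := by
          rw [MeasureTheory.integral_mul_const, aux_int_pow']
          ring
  -- per-j bound
  have hkey : ∀ j : ℕ, |((j:ℝ)+1) * m j - c|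
      ≤ (M + |c|) * (((j:ℝ)+1) * (1-θ)^j) + ε/2 := by
    intro j
    have hj1 : (0:ℝ) < (j:ℝ)+1 := by positivity
    have he : ((j:ℝ)+1) * m j - c = ((j:ℝ)+1) * (m j - c / ((j:ℝ)+1)) := by
      field_simp
    rw [he, ← hid j, hsplit j, abs_mul, abs_of_pos hj1]
    have habs : |(∫ x in Set.Icc (0:ℝ) (1-θ), x ^ j * (f x - c))
        + ∫ x in Set.Ioc (1-θ) 1, x ^ j * (f x - c)|
        ≤ (1-θ)^j * (M + |c|) + (ε/2) * (1 / ((j:ℝ)+1)) := by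
      calc _ ≤ |∫ x in Set.Icc (0:ℝ) (1-θ), x ^ j * (f x - c)|
            + |∫ x in Set.Ioc (1-θ) 1, x ^ j * (f x - c)| := abs_add_le _ _
        _ ≤ (1-θ)^j * (M + |c|) + (ε/2) * (1 / ((j:ℝ)+1)) := by
            have h1 := hA j
            have h2 := hB j
            rw [Real.norm_eq_abs] at h1 h2
            linarith
    calc ((j:ℝ)+1) * |(∫ x in Set.Icc (0:ℝ) (1-θ), x ^ j * (f x - c))
          + ∫ x in Set.Ioc (1-θ) 1, x ^ j * (f x - c)|
        ≤ ((j:ℝ)+1) * ((1-θ)^j * (M + |c|) + (ε/2) * (1 / ((j:ℝ)+1))) :=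
          mul_le_mul_of_nonneg_left habs (by positivity)
      _ = (M + |c|) * (((j:ℝ)+1) * (1-θ)^j) + ε/2 := by
          field_simp
  -- E j → 0
  have hr0 : (0:ℝ) ≤ 1 - θ := by linarith
  have hr1 : ‖(1-θ : ℝ)‖ < 1 := by
    rw [Real.norm_eq_abs, abs_of_nonneg hr0]
    linarith
  have s1 : Summable (fun j : ℕ => (j:ℝ)^1 * (1-θ)^j) :=
    summable_pow_mul_geometric_of_norm_lt_one 1 hr1
  have s2 : Summable (fun j : ℕ => (1-θ)^j) :=
    summable_geometric_of_norm_lt_one hr1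
  have htend0 : Tendsto (fun j : ℕ => ((j:ℝ)+1) * (1-θ)^j) atTop (𝓝 0) := by
    have := (s1.add s2).tendsto_atTop_zero
    apply this.congr
    intro j
    push_cast
    ring
  have htendE : Tendsto (fun j : ℕ => (M + |c|) * (((j:ℝ)+1) * (1-θ)^j)) atTop (𝓝 0) := by
    have := htend0.const_mul (M + |c|)
    simpa using this
  have hevE : ∀ᶠ j : ℕ in atTop, (M + |c|) * (((j:ℝ)+1) * (1-θ)^j) < ε/2 :=
    htendE.eventually_lt_const (by positivity)
  obtain ⟨N, hN⟩ := eventually_atTop.mp hevE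
  refine ⟨N, fun j hj => ?_⟩
  rw [Real.dist_eq]
  calc |((j:ℝ)+1) * m j - c| ≤ (M + |c|) * (((j:ℝ)+1) * (1-θ)^j) + ε/2 := hkey j
    _ < ε/2 + ε/2 := by linarith [hN j hj]
    _ = ε := by ring
end abelian

set_option maxHeartbeats 1000000

/-- Let `μ` be a probability measure on `[0,1]` with
continuous density `f` with respect to Lebesgue measure, and suppose
`f(x) → c > 0` as `x → 1⁻`.  Then the moment zeta function
`ζ_μ(k) = ∑_{j≥1} (m j)^k` is finite for every `k ≥ 2`, and
`(1/(n log n)) ∑_{k=2}^n (-1)^k C(n,k) ζ_μ(k) → c` as `n → ∞`. -/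
theorem stmt_13 (f : ℝ → ℝ) (c : ℝ) (hc : 0 < c)
    (hf_cont : ContinuousOn f (Set.Icc (0 : ℝ) 1))
    (hf_nonneg : ∀ x ∈ Set.Icc (0 : ℝ) 1, 0 ≤ f x)
    (hf_prob : ∫ x in Set.Icc (0 : ℝ) 1, f x = 1)
    (hf_lim : Tendsto f (nhdsWithin 1 (Set.Iio 1)) (𝓝 c))
    (m : ℕ → ℝ) (hm : ∀ j, m j = ∫ x in Set.Icc (0 : ℝ) 1, x ^ j * f x) :
    (∀ k : ℕ, 2 ≤ k → Summable fun j : ℕ => m (j + 1) ^ k) ∧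
    Tendsto (fun n : ℕ => (1 / ((n : ℝ) * Real.log n)) *
        ∑ k ∈ Icc 2 n, (-1 : ℝ) ^ k * (n.choose k : ℝ) * ∑' j : ℕ, m (j + 1) ^ k)
      atTop (𝓝 c) := by
  have hnn : ∀ j, 0 ≤ m j := fun j => aux_m_nonneg f hf_cont hf_nonneg m hm j
  have hle1 : ∀ j, m j ≤ 1 := fun j => aux_m_le_one f hf_cont hf_nonneg hf_prob m hm j
  obtain ⟨M, hM0, hMd⟩ := aux_m_decay f hf_cont hf_nonneg m hm
  have habel : Tendsto (fun j : ℕ => ((j:ℝ)+1) * m j) atTop (𝓝 c) :=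
    aux_abelian hc hf_cont hf_lim hm
  -- base summable sequence
  have hbase : Summable (fun j : ℕ => ((1:ℝ)/((j:ℝ)+1))^2) := by
    have h0 : Summable (fun j : ℕ => (1:ℝ)/(j:ℝ)^2) :=
      Real.summable_one_div_nat_pow.2 one_lt_two
    have h1 := (summable_nat_add_iff 1).2 h0
    apply h1.congr
    intro j
    push_cast
    rw [div_pow, one_pow]
  have hm2 : ∀ j : ℕ, m (j+1)^2 ≤ M^2 * ((1:ℝ)/((j:ℝ)+1))^2 := by
    intro j
    have h1 : m (j+1) ≤ M / ((j:ℝ)+1) := by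
      have := hMd (j+1)
      push_cast at this
      calc m (j+1) ≤ M / ((j:ℝ)+1+1) := this
        _ ≤ M / ((j:ℝ)+1) := by
            apply div_le_div_of_nonneg_left hM0 (by positivity) <;> linarith
    calc m (j+1)^2 ≤ (M / ((j:ℝ)+1))^2 := pow_le_pow_left₀ (hnn _) h1 2
      _ = M^2 * ((1:ℝ)/((j:ℝ)+1))^2 := by field_simp
  -- Part 1
  have hsum : ∀ k : ℕ, 2 ≤ k → Summable fun j : ℕ => m (j + 1) ^ k := by
    intro k hk
    apply Summable.of_nonneg_of_le (fun j => pow_nonneg (hnn _) k)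
      (fun j => ?_) (hbase.mul_left (M^2))
    calc m (j+1)^k ≤ m (j+1)^2 := pow_le_pow_of_le_one (hnn _) (hle1 _) hk
      _ ≤ M^2 * ((1:ℝ)/((j:ℝ)+1))^2 := hm2 j
  refine ⟨hsum, ?_⟩
  -- summability of h-terms
  have hSsum : ∀ n : ℕ, Summable (fun j : ℕ =>
      (1 - m (j+1))^n - 1 + (n:ℝ) * m (j+1)) := by
    intro n
    apply Summable.of_nonneg_of_le
      (fun j => aux_h_nonneg (hnn _) (hle1 _) n) (fun j => ?_)
      ((hbase.mul_left (M^2)).mul_left ((n:ℝ)^2/2))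
    calc (1 - m (j+1))^n - 1 + (n:ℝ) * m (j+1) ≤ (n:ℝ)^2 * m (j+1)^2 / 2 :=
          aux_h_le_sq (hnn _) (hle1 _) n
      _ ≤ (n:ℝ)^2/2 * (M^2 * ((1:ℝ)/((j:ℝ)+1))^2) := by
          have := hm2 j
          nlinarith [sq_nonneg (n:ℝ)]
  -- rewrite the sum via the binomial identity
  have hswap : ∀ᶠ n : ℕ in atTop,
      (1 / ((n : ℝ) * Real.log n)) *
        ∑ k ∈ Icc 2 n, (-1 : ℝ) ^ k * (n.choose k : ℝ) * ∑' j : ℕ, m (j + 1) ^ k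
      = (1 / ((n : ℝ) * Real.log n)) *
        ∑' j : ℕ, ((1 - m (j+1))^n - 1 + (n:ℝ) * m (j+1)) := by
    filter_upwards [eventually_ge_atTop 2] with n hn
    congr 1
    have h1 : ∀ k ∈ Icc 2 n, Summable (fun j : ℕ =>
        (-1 : ℝ) ^ k * (n.choose k : ℝ) * m (j + 1) ^ k) := by
      intro k hk
      exact ((hsum k (mem_Icc.mp hk).1).mul_left _)
    have h2 : ∀ k ∈ Icc 2 n, (-1 : ℝ) ^ k * (n.choose k : ℝ) * ∑' j : ℕ, m (j + 1) ^ k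
        = ∑' j : ℕ, (-1 : ℝ) ^ k * (n.choose k : ℝ) * m (j + 1) ^ k := by
      intro k hk
      exact (tsum_mul_left).symm
    rw [Finset.sum_congr rfl h2, ← Summable.tsum_finsetSum h1]
    apply tsum_congr
    intro j
    exact aux_binom (m (j+1)) n hn
  rw [tendsto_congr' hswap]
  -- main limit
  rw [Metric.tendsto_nhds]
  intro ε hε
  set ε₀ : ℝ := min (ε/4) (c/2) with hε₀def
  have hε₀ : 0 < ε₀ := lt_min (by positivity) (by positivity)
  have hε₀ε : ε₀ ≤ ε/4 := min_le_left _ _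
  have hε₀c : ε₀ ≤ c/2 := min_le_right _ _
  obtain ⟨J₀, hJ₀⟩ := (Metric.tendsto_atTop.mp habel) ε₀ hε₀
  set a : ℝ := c + ε₀ with hadef
  set b : ℝ := c - ε₀ with hbdef
  have ha0 : 0 < a := by simp only [hadef]; linarith
  have hb0 : 0 < b := by simp only [hbdef]; linarith
  have hba : b ≤ a := by simp only [hadef, hbdef]; linarith
  set J : ℕ := max (max J₀ 1) ⌈a⌉₊ with hJdef
  have hJ1 : 1 ≤ J := le_trans (le_max_right J₀ 1) (le_max_left _ _)
  have hJa : a ≤ (J:ℝ) := by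
    have h1 : ⌈a⌉₊ ≤ J := le_max_right _ _
    calc a ≤ (⌈a⌉₊:ℝ) := Nat.le_ceil a
      _ ≤ (J:ℝ) := by exact_mod_cast h1
  have hJJ₀ : J₀ ≤ J := le_trans (le_max_left J₀ 1) (le_max_left _ _)
  have hmom : ∀ i : ℕ, J ≤ i →
      b / ((i:ℝ)+1) ≤ m i ∧ m i ≤ a / ((i:ℝ)+1) := by
    intro i hi
    have h := hJ₀ i (le_trans hJJ₀ hi)
    rw [Real.dist_eq, abs_lt] at h
    have hi1 : (0:ℝ) < (i:ℝ)+1 := by positivity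
    constructor
    · rw [div_le_iff₀ hi1]
      simp only [hbdef]
      nlinarith [h.1]
    · rw [le_div_iff₀ hi1]
      simp only [hadef]
      nlinarith [h.2]
  -- the key bounds on S n
  have hbound : ∀ n : ℕ, J + 1 ≤ n → 3 ≤ n →
      ((n:ℝ)*b*(Real.log n - Real.log ((J:ℝ)+2)) - n
        ≤ ∑' j : ℕ, ((1 - m (j+1))^n - 1 + (n:ℝ) * m (j+1))) ∧
      (∑' j : ℕ, ((1 - m (j+1))^n - 1 + (n:ℝ) * m (j+1))
        ≤ (J:ℝ)*n + n*a*Real.log n + n*a^2/2) := by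
    intro n hnJ hn3
    set u : ℕ → ℝ := fun j => (1 - m (j+1))^n - 1 + (n:ℝ) * m (j+1) with hudef
    have hu : Summable u := hSsum n
    have hunn : ∀ j, 0 ≤ u j := fun j => aux_h_nonneg (hnn _) (hle1 _) n
    set K : ℕ := n - J with hKdef
    have hJn : J ≤ n := by omega
    have hKJ : K + J = n := by omega
    have hcastK : ((K:ℕ):ℝ) = (n:ℝ) - (J:ℝ) := by
      rw [hKdef]; push_cast [Nat.cast_sub hJn]; ring
    have hu2 : Summable (fun j => u (j + J)) := (summable_nat_add_iff J).2 hu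
    have hu3 : Summable (fun j => u (j + K + J)) := (summable_nat_add_iff (f := fun j => u (j + J)) K).2 hu2
    have split1 := Summable.sum_add_tsum_nat_add J hu
    have split2 := Summable.sum_add_tsum_nat_add K hu2
    -- head bounds
    have h_head_ub : ∑ j ∈ range J, u j ≤ (J:ℝ) * n := by
      have : ∀ j ∈ range J, u j ≤ (n:ℝ) := by
        intro j _
        calc u j ≤ (n:ℝ) * m (j+1) := aux_h_le_nt (hnn _) (hle1 _) n
          _ ≤ (n:ℝ) * 1 := mul_le_mul_of_nonneg_left (hle1 _) (Nat.cast_nonneg n)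
          _ = (n:ℝ) := mul_one _
      calc ∑ j ∈ range J, u j ≤ ∑ j ∈ range J, (n:ℝ) := Finset.sum_le_sum this
        _ = (J:ℝ) * n := by rw [Finset.sum_const, Finset.card_range, nsmul_eq_mul]
    have h_head_nn : 0 ≤ ∑ j ∈ range J, u j := Finset.sum_nonneg (fun j _ => hunn j)
    -- head2 upper bound
    have h_head2_ub : ∑ j ∈ range K, u (j + J) ≤ (n:ℝ)*a*Real.log n := by
      have hterm : ∀ j ∈ range K, u (j + J) ≤ (n:ℝ)*a*((1:ℝ)/((J:ℝ)+j+1)) := by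
        intro j _
        have hpos1 : (0:ℝ) < (J:ℝ)+j+1 := by positivity
        have hub' := (hmom (j+J+1) (by omega)).2
        have hub2 : m (j+J+1) ≤ a/((J:ℝ)+j+1) := by
          refine le_trans hub' ?_
          apply div_le_div_of_nonneg_left ha0.le hpos1
          push_cast
          linarith
        have h1le : a/((J:ℝ)+j+1) ≤ 1 := by
          rw [div_le_one hpos1]
          have : (0:ℝ) ≤ j := Nat.cast_nonneg j
          linarith [hJa]
        have hstep1 : u (j + J) ≤ (1 - a/((J:ℝ)+j+1))^n - 1 + (n:ℝ)*(a/((J:ℝ)+j+1)) :=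
          aux_h_mono (hnn _) hub2 h1le n
        have hstep2 : (1 - a/((J:ℝ)+j+1))^n - 1 + (n:ℝ)*(a/((J:ℝ)+j+1))
            ≤ (n:ℝ)*(a/((J:ℝ)+j+1)) := aux_h_le_nt (div_nonneg ha0.le hpos1.le) h1le n
        calc u (j + J) ≤ (n:ℝ)*(a/((J:ℝ)+j+1)) := le_trans hstep1 hstep2
          _ = (n:ℝ)*a*((1:ℝ)/((J:ℝ)+j+1)) := by ring
      calc ∑ j ∈ range K, u (j + J)
          ≤ ∑ j ∈ range K, (n:ℝ)*a*((1:ℝ)/((J:ℝ)+j+1)) := Finset.sum_le_sum hterm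
        _ = (n:ℝ)*a * ∑ j ∈ range K, (1:ℝ)/((J:ℝ)+j+1) := by rw [← Finset.mul_sum]
        _ ≤ (n:ℝ)*a * (Real.log ((J:ℝ)+K) - Real.log J) := by
            exact mul_le_mul_of_nonneg_left (aux_sum_inv_le J K hJ1)
              (mul_nonneg (Nat.cast_nonneg n) ha0.le)
        _ ≤ (n:ℝ)*a*Real.log n := by
            apply mul_le_mul_of_nonneg_left _ (mul_nonneg (Nat.cast_nonneg n) ha0.le)
            have h1 : ((J:ℝ)+K) = (n:ℝ) := by rw [hcastK]; ring
            rw [h1]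
            have : 0 ≤ Real.log J := Real.log_nonneg (by exact_mod_cast hJ1)
            linarith
    -- head2 lower bound
    have h_head2_lb : (n:ℝ)*b*(Real.log n - Real.log ((J:ℝ)+2)) - n
        ≤ ∑ j ∈ range K, u (j + J) := by
      have hterm : ∀ j ∈ range K, (n:ℝ)*b*((1:ℝ)/((J:ℝ)+2+j)) - 1 ≤ u (j + J) := by
        intro j _
        have hpos1 : (0:ℝ) < (J:ℝ)+2+j := by positivity
        have hlb' := (hmom (j+J+1) (by omega)).1
        have hlb2 : b/((J:ℝ)+2+j) ≤ m (j+J+1) := by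
          refine le_trans (le_of_eq ?_) hlb'
          congr 1
          push_cast
          ring
        have h1le : b/((J:ℝ)+2+j) ≤ 1 := by
          rw [div_le_one hpos1]
          have : (0:ℝ) ≤ j := Nat.cast_nonneg j
          linarith [hJa, hba]
        have hstep1 : (1 - b/((J:ℝ)+2+j))^n - 1 + (n:ℝ)*(b/((J:ℝ)+2+j)) ≤ u (j + J) :=
          aux_h_mono (div_nonneg hb0.le hpos1.le) hlb2 (hle1 _) n
        have hstep2 : (n:ℝ)*(b/((J:ℝ)+2+j)) - 1
            ≤ (1 - b/((J:ℝ)+2+j))^n - 1 + (n:ℝ)*(b/((J:ℝ)+2+j)) := aux_h_ge n h1le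
        calc (n:ℝ)*b*((1:ℝ)/((J:ℝ)+2+j)) - 1 = (n:ℝ)*(b/((J:ℝ)+2+j)) - 1 := by ring
          _ ≤ u (j + J) := le_trans hstep2 hstep1
      have hsum2 := aux_sum_inv_ge (J+2) K (by omega)
      have hsum2' : Real.log ((n:ℝ)+2) - Real.log ((J:ℝ)+2)
          ≤ ∑ j ∈ range K, (1:ℝ)/((J:ℝ)+2+j) := by
        have he1 : ((J+2:ℕ):ℝ) = (J:ℝ)+2 := by push_cast; ring
        have he2 : ((J+2:ℕ):ℝ) + (K:ℝ) = (n:ℝ)+2 := by rw [he1, hcastK]; ring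
        calc Real.log ((n:ℝ)+2) - Real.log ((J:ℝ)+2)
            = Real.log (((J+2:ℕ):ℝ) + K) - Real.log ((J+2:ℕ):ℝ) := by rw [he2, he1]
          _ ≤ ∑ j ∈ range K, (1:ℝ)/(((J+2:ℕ):ℝ)+j) := hsum2
          _ = ∑ j ∈ range K, (1:ℝ)/((J:ℝ)+2+j) := by
              apply Finset.sum_congr rfl
              intro j _
              rw [he1]
      have hlogn : Real.log (n:ℝ) ≤ Real.log ((n:ℝ)+2) :=
        Real.log_le_log (by positivity) (by linarith)
      calc (n:ℝ)*b*(Real.log n - Real.log ((J:ℝ)+2)) - n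
          ≤ (n:ℝ)*b*(Real.log ((n:ℝ)+2) - Real.log ((J:ℝ)+2)) - K := by
            have hKn' : (K:ℝ) ≤ (n:ℝ) := by rw [hcastK]; have : (0:ℝ) ≤ J := Nat.cast_nonneg J; linarith
            have hnb : (0:ℝ) ≤ (n:ℝ)*b := mul_nonneg (Nat.cast_nonneg n) hb0.le
            have h6 := mul_le_mul_of_nonneg_left
              (sub_le_sub_right hlogn (Real.log ((J:ℝ)+2))) hnb
            linarith [h6, hKn']
        _ ≤ (n:ℝ)*b*(∑ j ∈ range K, (1:ℝ)/((J:ℝ)+2+j)) - K := by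
            have hnb : (0:ℝ) ≤ (n:ℝ)*b := mul_nonneg (Nat.cast_nonneg n) hb0.le
            have h6 := mul_le_mul_of_nonneg_left hsum2' hnb
            linarith [h6]
        _ = ∑ j ∈ range K, ((n:ℝ)*b*((1:ℝ)/((J:ℝ)+2+j)) - 1) := by
            rw [Finset.sum_sub_distrib, ← Finset.mul_sum, Finset.sum_const, Finset.card_range]
            simp
        _ ≤ ∑ j ∈ range K, u (j + J) := Finset.sum_le_sum hterm
    -- tail bound
    have h_tail_nn : 0 ≤ ∑' j : ℕ, u (j + K + J) := tsum_nonneg (fun j => hunn _)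
    have h_tail_ub : ∑' j : ℕ, u (j + K + J) ≤ (n:ℝ)*a^2/2 := by
      obtain ⟨s, hs, hsle⟩ := aux_tail_sq n (by omega)
      have hterm : ∀ j : ℕ, u (j + K + J) ≤ (n:ℝ)^2*a^2/2 * ((1:ℝ)/((n:ℝ)+1+j)^2) := by
        intro j
        have he : j + K + J = j + n := by omega
        rw [he]
        have hpos1 : (0:ℝ) < (n:ℝ)+1+j := by positivity
        have hub' := (hmom (j+n+1) (by omega)).2
        have hub2 : m (j+n+1) ≤ a/((n:ℝ)+1+j) := by
          refine le_trans hub' ?_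
          apply div_le_div_of_nonneg_left ha0.le hpos1
          push_cast
          linarith
        have hmsq : m (j+n+1)^2 ≤ (a/((n:ℝ)+1+j))^2 := pow_le_pow_left₀ (hnn _) hub2 2
        calc u (j + n) ≤ (n:ℝ)^2 * m (j+n+1)^2 / 2 := aux_h_le_sq (hnn _) (hle1 _) n
          _ ≤ (n:ℝ)^2 * (a/((n:ℝ)+1+j))^2 / 2 := by
              have h6 := mul_le_mul_of_nonneg_left hmsq (sq_nonneg (n:ℝ))
              linarith
          _ = (n:ℝ)^2*a^2/2 * ((1:ℝ)/((n:ℝ)+1+j)^2) := by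
              rw [div_pow]
              field_simp
      have hrs : Summable (fun j : ℕ => (n:ℝ)^2*a^2/2 * ((1:ℝ)/((n:ℝ)+1+j)^2)) :=
        hs.summable.mul_left _
      calc ∑' j : ℕ, u (j + K + J)
          ≤ ∑' j : ℕ, (n:ℝ)^2*a^2/2 * ((1:ℝ)/((n:ℝ)+1+j)^2) := Summable.tsum_le_tsum hterm hu3 hrs
        _ = (n:ℝ)^2*a^2/2 * s := by rw [tsum_mul_left, hs.tsum_eq]
        _ ≤ (n:ℝ)^2*a^2/2 * (1/(n:ℝ)) := by
            apply mul_le_mul_of_nonneg_left hsle (by positivity)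
        _ = (n:ℝ)*a^2/2 := by
            have hn0 : (n:ℝ) ≠ 0 := by positivity
            field_simp
    -- assemble
    have hS : ∑' j : ℕ, u j
        = ∑ j ∈ range J, u j + ∑ j ∈ range K, u (j + J) + ∑' j : ℕ, u (j + K + J) := by
      rw [← split1, ← split2]
      ring
    constructor
    · rw [hS]
      linarith [h_head_nn, h_head2_lb, h_tail_nn]
    · rw [hS]
      exact add_le_add (add_le_add h_head_ub h_head2_ub) h_tail_ub
  -- final limit computation
  have hLog : Tendsto (fun n : ℕ => Real.log n) atTop atTop :=
    Real.tendsto_log_atTop.comp tendsto_natCast_atTop_atTop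
  have hD1 : Tendsto (fun n : ℕ => ((J:ℝ) + a^2/2)/Real.log n) atTop (𝓝 0) :=
    Tendsto.div_atTop tendsto_const_nhds hLog
  have hD2 : Tendsto (fun n : ℕ => (b*Real.log ((J:ℝ)+2) + 1)/Real.log n) atTop (𝓝 0) :=
    Tendsto.div_atTop tendsto_const_nhds hLog
  filter_upwards [eventually_ge_atTop (J+1), eventually_ge_atTop 3,
    hD1.eventually_lt_const hε₀, hD2.eventually_lt_const hε₀] with n h1 h2 h3 h4
  obtain ⟨hlo, hhi⟩ := hbound n h1 h2
  have hn0 : (0:ℝ) < n := by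
    have : (3:ℝ) ≤ (n:ℝ) := by exact_mod_cast h2
    linarith
  have hL : 0 < Real.log n := Real.log_pos (by
    have : (3:ℝ) ≤ (n:ℝ) := by exact_mod_cast h2
    linarith)
  set S : ℝ := ∑' j : ℕ, ((1 - m (j+1))^n - 1 + (n:ℝ) * m (j+1)) with hSdef
  have hxle : 1 / ((n : ℝ) * Real.log n) * S ≤ a + ((J:ℝ) + a^2/2)/Real.log n := by
    have hfac : (0:ℝ) ≤ 1 / ((n : ℝ) * Real.log n) := by positivity
    have h5 := mul_le_mul_of_nonneg_left hhi hfac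
    calc 1 / ((n : ℝ) * Real.log n) * S
        ≤ 1 / ((n : ℝ) * Real.log n) * ((J:ℝ)*n + n*a*Real.log n + n*a^2/2) := h5
      _ = a + ((J:ℝ) + a^2/2)/Real.log n := by
          field_simp
          ring
  have hxge : b - (b*Real.log ((J:ℝ)+2) + 1)/Real.log n ≤ 1 / ((n : ℝ) * Real.log n) * S := by
    have hfac : (0:ℝ) ≤ 1 / ((n : ℝ) * Real.log n) := by positivity
    have h5 := mul_le_mul_of_nonneg_left hlo hfac
    calc b - (b*Real.log ((J:ℝ)+2) + 1)/Real.log n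
        = 1 / ((n : ℝ) * Real.log n) * ((n:ℝ)*b*(Real.log n - Real.log ((J:ℝ)+2)) - n) := by
          field_simp
          ring
      _ ≤ 1 / ((n : ℝ) * Real.log n) * S := h5
  rw [Real.dist_eq, abs_lt]
  constructor
  · have : b - ε₀ ≤ 1 / ((n : ℝ) * Real.log n) * S := by linarith
    simp only [hbdef] at this
    linarith
  · have : 1 / ((n : ℝ) * Real.log n) * S ≤ a + ε₀ := by linarith
    simp only [hadef] at this
    linarith
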